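/- For all integers k ≥ 2 and n ≥ m ≥ 3, the Ramsey number of k-uniform loose cycles satisfies R(C^k_n, C^k_m) ≥ (k−1)n + ⌊(m+1)/2⌋ − 1. -/

import Mathlib

/-- The set of vertex *indices* of the `i`-th edge of a `k`-uniform loose path/cycle:
the indices `i*(k-1), …, i*(k-1) + (k-1)` (consecutive edges overlap in one index). -/
def looseEdgeIdx (k i : ℕ) : Finset ℕ := Finset.Icc (i * (k - 1)) (i * (k - 1) + (k - 1))

/-- `v` is (the vertex map of) a copy of the `k`-uniform loose path of length `n`
(vertex indices `0, …, n*(k-1)`) all of whose edges receive color `c` under the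
coloring `col` of the `k`-subsets of `V`. -/
def IsLoosePathCopy {V : Type} [DecidableEq V] (k : ℕ) (col : Finset V → Bool) (c : Bool)
    (n : ℕ) (v : ℕ → V) : Prop :=
  Set.InjOn v (Set.Iio (n * (k - 1) + 1)) ∧
    ∀ i < n, col ((looseEdgeIdx k i).image v) = c

/-- The coloring `col` contains a copy of the `k`-uniform loose path of length `n`
in color `c`. -/
def HasLoosePath {V : Type} [DecidableEq V] (k : ℕ) (col : Finset V → Bool) (c : Bool)
    (n : ℕ) : Prop :=
  ∃ v : ℕ → V, IsLoosePathCopy k col c n v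

/-- `v` is (the vertex map of) a copy of the `k`-uniform loose cycle of length `n`
(vertex indices `0, …, n*(k-1) - 1`, taken modulo `n*(k-1)`) all of whose edges
receive color `c` under the coloring `col`. -/
def IsLooseCycleCopy {V : Type} [DecidableEq V] (k : ℕ) (col : Finset V → Bool) (c : Bool)
    (n : ℕ) (v : ℕ → V) : Prop :=
  Set.InjOn v (Set.Iio (n * (k - 1))) ∧
    ∀ i < n, col ((looseEdgeIdx k i).image (fun j => v (j % (n * (k - 1))))) = c

/-- The coloring `col` contains a copy of the `k`-uniform loose cycle of length `n`
in color `c`. -/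
def HasLooseCycle {V : Type} [DecidableEq V] (k : ℕ) (col : Finset V → Bool) (c : Bool)
    (n : ℕ) : Prop :=
  ∃ v : ℕ → V, IsLooseCycleCopy k col c n v

/-- For `k ≥ 2` and `n ≥ m ≥ 3`, the Ramsey number of
`k`-uniform loose cycles satisfies `R(C^k_n, C^k_m) ≥ (k−1)n + ⌊(m+1)/2⌋ − 1`:
every `N` such that all red/blue colorings of the `k`-subsets of an `N`-set
contain a red copy of `C^k_n` or a blue copy of `C^k_m` satisfies
`N ≥ (k−1)n + ⌊(m+1)/2⌋ − 1` (red = `true`, blue = `false`). -/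
theorem cycle_cycle_ramsey_lower_bound (k m n : ℕ) (hk : 2 ≤ k) (hm : 3 ≤ m)
    (hmn : m ≤ n) :
    ∀ N : ℕ, (∀ col : Finset (Fin N) → Bool,
        HasLooseCycle k col true n ∨ HasLooseCycle k col false m) →
      (k - 1) * n + (m + 1) / 2 - 1 ≤ N := by
  intro N hN
  by_contra hlt
  push_neg at hlt
  have hd : 1 ≤ k - 1 := by omega
  have hPn : n ≤ (k - 1) * n := Nat.le_mul_of_pos_left n (by omega)
  -- the threshold: vertices with value < c are "part A"
  set c : ℕ := (k - 1) * n - 1 with hc_def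
  set col : Finset (Fin N) → Bool := fun S => decide (∀ x ∈ S, (x : ℕ) < c) with hcol_def
  rcases hN col with ⟨v, hinj, hedges⟩ | ⟨v, hinj, hedges⟩
  · -- red loose cycle C_n: needs n*(k-1) distinct vertices all below c
    set L : ℕ := n * (k - 1) with hL_def
    have hcL : c < L := by
      have : L = (k - 1) * n := Nat.mul_comm _ _
      omega
    have hmaps : ∀ j ∈ Finset.range L,
        v j ∈ Finset.univ.filter (fun x : Fin N => (x : ℕ) < c) := by
      intro j hj
      rw [Finset.mem_range] at hj
      set i : ℕ := j / (k - 1) with hi_def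
      have hi_lt : i < n := by
        rw [hi_def]
        exact Nat.div_lt_of_lt_mul (by rw [Nat.mul_comm]; exact hj)
      have h1 : i * (k - 1) ≤ j := Nat.div_mul_le_self j (k - 1)
      have h2 : j < i * (k - 1) + (k - 1) := by
        have hdm := Nat.div_add_mod j (k - 1)
        have hmd := Nat.mod_lt j (show 0 < k - 1 by omega)
        have hcm : (k - 1) * (j / (k - 1)) = i * (k - 1) := by rw [hi_def, Nat.mul_comm]
        linarith
      have hmem : j ∈ looseEdgeIdx k i := by
        rw [looseEdgeIdx, Finset.mem_Icc]; omega
      have hcol := hedges i hi_lt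
      rw [hcol_def] at hcol
      have hall := of_decide_eq_true hcol
      have := hall (v (j % L)) (Finset.mem_image_of_mem _ hmem)
      rw [Nat.mod_eq_of_lt hj] at this
      simp only [Finset.mem_filter, Finset.mem_univ, true_and]
      exact this
    have hinj' : Set.InjOn v ↑(Finset.range L) := by
      intro a ha b hb hab
      rw [Finset.coe_range] at ha hb
      exact hinj ha hb hab
    have hcard1 : L ≤ (Finset.univ.filter (fun x : Fin N => (x : ℕ) < c)).card := by
      have := Finset.card_le_card_of_injOn v hmaps hinj'
      simpa using this
    have hcard2 : (Finset.univ.filter (fun x : Fin N => (x : ℕ) < c)).card ≤ c := by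
      have : (Finset.univ.filter (fun x : Fin N => (x : ℕ) < c)).card
          ≤ (Finset.range c).card := by
        refine Finset.card_le_card_of_injOn (fun x => (x : ℕ)) ?_ ?_
        · intro x hx
          rw [Finset.mem_coe, Finset.mem_filter] at hx
          exact Finset.mem_range.mpr hx.2
        · intro a _ b _ hab
          exact Fin.ext hab
      simpa using this
    omega
  · -- blue loose cycle C_m: every edge meets part B, but each vertex is in ≤ 2 edges
    set L : ℕ := m * (k - 1) with hL_def
    have hL0 : 0 < L := by
      have : m ≤ L := Nat.le_mul_of_pos_right m (by omega)
      omega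
    have hex : ∀ i < m, ∃ j, j ∈ looseEdgeIdx k i ∧ c ≤ ((v (j % L) : ℕ)) := by
      intro i hi
      have hcol := hedges i hi
      rw [hcol_def] at hcol
      have := of_decide_eq_false hcol
      push_neg at this
      obtain ⟨x, hx, hcx⟩ := this
      obtain ⟨j, hj, rfl⟩ := Finset.mem_image.mp hx
      exact ⟨j, hj, hcx⟩
    set f : ℕ → ℕ := fun i =>
      if h : ∃ j, j ∈ looseEdgeIdx k i ∧ c ≤ ((v (j % L) : ℕ)) then h.choose else 0 with hf_def
    have hf_spec : ∀ i < m, f i ∈ looseEdgeIdx k i ∧ c ≤ ((v (f i % L) : ℕ)) := by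
      intro i hi
      have h := hex i hi
      rw [hf_def]
      simp only [h, dif_pos]
      exact h.choose_spec
    set g : ℕ → Fin N := fun i => v (f i % L) with hg_def
    -- each fiber of g on range m has at most 2 elements
    have hfiber : ∀ b ∈ (Finset.range m).image g,
        ((Finset.range m).filter (fun i => g i = b)).card ≤ 2 := by
      intro b hb
      obtain ⟨i0, hi0, hgi0⟩ := Finset.mem_image.mp hb
      rw [Finset.mem_range] at hi0
      set t : ℕ := f i0 % L with ht_def
      have hsub : (Finset.range m).filter (fun i => g i = b) ⊆
          (if t = 0 then ({0, m - 1} : Finset ℕ) else ({t / (k-1) - 1, t / (k-1)} : Finset ℕ)) := by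
        intro i hi
        rw [Finset.mem_filter, Finset.mem_range] at hi
        obtain ⟨him, hgi⟩ := hi
        -- v (f i % L) = v (f i0 % L), both args < L, so f i % L = t
        have hmod : f i % L = t := by
          apply hinj
          · exact Nat.mod_lt _ hL0
          · exact Nat.mod_lt _ hL0
          · rw [hg_def] at hgi hgi0; exact hgi.trans hgi0.symm
        obtain ⟨hedge, _⟩ := hf_spec i him
        rw [looseEdgeIdx, Finset.mem_Icc] at hedge
        have hub : f i ≤ L := by
          calc f i ≤ i * (k-1) + (k-1) := hedge.2
            _ = (i+1) * (k-1) := by ring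
            _ ≤ m * (k-1) := Nat.mul_le_mul_right _ (by omega)
        rcases Nat.lt_or_ge (f i) L with hlt' | hge
        · -- literal case: f i = t
          have hfit : f i = t := by rw [← hmod, Nat.mod_eq_of_lt hlt']
          rcases Nat.eq_zero_or_pos t with ht0 | htpos
          · -- t = 0: i * (k-1) ≤ 0 so i = 0
            have : i * (k - 1) = 0 := by omega
            have hi0' : i = 0 := by
              rcases Nat.mul_eq_zero.mp this with h | h
              · exact h
              · omega
            simp [ht0, hi0']
          · have hle1 : i ≤ t / (k - 1) :=
              (Nat.le_div_iff_mul_le (by omega)).mpr (by omega)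
            have hle2 : t / (k - 1) ≤ i + 1 := by
              have hlt2 : t < (k - 1) * (i + 2) := by nlinarith [hedge.1, hedge.2]
              have := Nat.div_lt_of_lt_mul hlt2
              omega
            have : i = t / (k-1) ∨ i = t / (k-1) - 1 := by omega
            have htne : ¬ (t = 0) := by omega
            simp only [htne, if_false, Finset.mem_insert, Finset.mem_singleton]
            tauto
        · -- wrap case: f i = L, t = 0, i = m - 1
          have hfiL : f i = L := by omega
          have ht0 : t = 0 := by rw [← hmod, hfiL, Nat.mod_self]
          have : m * (k-1) ≤ (i+1) * (k-1) := by
            calc m * (k-1) = L := rfl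
              _ = f i := hfiL.symm
              _ ≤ i * (k-1) + (k-1) := hedge.2
              _ = (i+1) * (k-1) := by ring
          have hmi : m ≤ i + 1 := Nat.le_of_mul_le_mul_right this (by omega)
          have : i = m - 1 := by omega
          simp [ht0, this]
      calc ((Finset.range m).filter (fun i => g i = b)).card
          ≤ _ := Finset.card_le_card hsub
        _ ≤ 2 := by
            split
            · exact (Finset.card_insert_le _ _).trans (by simp)
            · exact (Finset.card_insert_le _ _).trans (by simp)
    have hcount : m ≤ 2 * ((Finset.range m).image g).card := by
      have := Finset.card_le_mul_card_image (f := g) (Finset.range m) 2 hfiber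
      simpa using this
    -- the image lies in part B, which has at most (m+1)/2 - 1 elements
    have himg : ((Finset.range m).image g).card ≤ N - c := by
      have h1 : ((Finset.range m).image g).card ≤ (Finset.Ico c N).card := by
        refine Finset.card_le_card_of_injOn (fun x => (x : ℕ)) ?_ ?_
        · intro x hx
          obtain ⟨i, hi, rfl⟩ := Finset.mem_image.mp hx
          rw [Finset.mem_range] at hi
          have := (hf_spec i hi).2
          rw [Finset.mem_coe, Finset.mem_Ico]
          exact ⟨this, (g i).isLt⟩
        · intro a _ b _ hab
          exact Fin.ext hab
      simpa using h1
    have h2q : 2 * ((m + 1) / 2) ≤ m + 1 := by omega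
    omega
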